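/- arXiv:2008.03279 — 2 statements merged into one kernel-verified Lean document; each statement's English description precedes it below -/
import Mathlib

section
/- Let R₁, R₂, S₁, S₂ be finite digraphs with R₁ ⊑_Γ S₁ and R₂ ⊑_Γ S₂, both with respect to the class of all finite digraphs. Then R₁ + R₂ ⊑_Γ S₁ + S₂ with respect to the class of all finite digraphs, where + denotes the direct (disjoint) sum of digraphs. -/
/-- A homomorphism between digraphs `(V, A)` and `(W, B)`:
a map sending every arc to an arc. -/
def IsHom {V W : Type} (A : V → V → Prop) (B : W → W → Prop) (f : V → W) : Prop :=
  ∀ ⦃v w : V⦄, A v w → B (f v) (f w)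

/-- A strict homomorphism: a homomorphism mapping proper arcs to proper arcs. -/
def IsStrictHom {V W : Type} (A : V → V → Prop) (B : W → W → Prop) (f : V → W) : Prop :=
  IsHom A B f ∧ ∀ ⦃v w : V⦄, A v w → v ≠ w → f v ≠ f w

/-- Adjacency in a digraph. -/
def DAdj {V : Type} (A : V → V → Prop) (v w : V) : Prop := A v w ∨ A w v

/-- `v` and `w` are connected in `X`: `v = w` (with `v ∈ X`), or there is a line
`z 0, …, z I` inside `X` connecting them, consecutive members being adjacent. -/
def ConnIn {V : Type} (A : V → V → Prop) (X : Set V) (v w : V) : Prop :=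
  ∃ (I : ℕ) (z : ℕ → V), z 0 = v ∧ z I = w ∧ (∀ i ≤ I, z i ∈ X) ∧
    ∀ i < I, DAdj A (z i) (z (i + 1))

/-- `γ_X(v)`: the set of `w ∈ X` connected with `v` in `X`. -/
def gammaSet {V : Type} (A : V → V → Prop) (X : Set V) (v : V) : Set V :=
  {w | ConnIn A X v w}

/-- `Γ_ξ(v)`: the connectivity component of `v` in the preimage `ξ⁻¹(ξ(v))`. -/
def GammaComp {V W : Type} (A : V → V → Prop) (ξ : V → W) (v : V) : Set V :=
  gammaSet A {u | ξ u = ξ v} v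

/-- The set of homomorphisms `H(G,H)` (as a type). -/
def HomSet {V W : Type} (A : V → V → Prop) (B : W → W → Prop) : Type :=
  {f : V → W // IsHom A B f}

/-- The set of strict homomorphisms `S(G,H)` (as a type). -/
def StrictHomSet {V W : Type} (A : V → V → Prop) (B : W → W → Prop) : Type :=
  {f : V → W // IsStrictHom A B f}

/-- The vertex set of the digraph `G_ξ`: the components `Γ_ξ(v)`, `v ∈ V(G)`. -/
def GVert {V W : Type} (A : V → V → Prop) (ξ : V → W) : Type :=
  {C : Set V // ∃ v, C = GammaComp A ξ v}

/-- The arc relation of the digraph `G_ξ`. -/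
def GArc {V W : Type} (A : V → V → Prop) (ξ : V → W) :
    GVert A ξ → GVert A ξ → Prop :=
  fun C D => ∃ a ∈ C.1, ∃ b ∈ D.1, A a b

/-- The canonical map `π_ξ : G → G_ξ`, `v ↦ Γ_ξ(v)`. -/
def piMap {V W : Type} (A : V → V → Prop) (ξ : V → W) (v : V) : GVert A ξ :=
  ⟨GammaComp A ξ v, v, rfl⟩

/-- `Θ_{G,H'}(ξ)`: the homomorphisms `ζ : G → H'` with `G_ζ = G_ξ`
(equality of the digraphs `G_ζ` and `G_ξ`, i.e. of their vertex sets,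
which determines the arc sets). -/
def ThetaSet {V W W' : Type} (A : V → V → Prop) (B' : W' → W' → Prop)
    (ξ : V → W) : Set (V → W') :=
  {ζ | IsHom A B' ζ ∧
    {C : Set V | ∃ v, C = GammaComp A ζ v} = {C : Set V | ∃ v, C = GammaComp A ξ v}}

/-- `R ⊑_Γ S` with respect to a class `D'` of finite digraphs: a strong Γ-scheme
from `R` to `S` exists, i.e. for every finite digraph `G ∈ D'` an injective map
`ρ_G : H(G,R) → H(G,S)` with `Γ_{ρ_G(ξ)}(v) = Γ_ξ(v)` for all `ξ`, `v`. -/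
def SqGamma (D' : (V : Type) → (V → V → Prop) → Prop)
    {VR VS : Type} (R : VR → VR → Prop) (S : VS → VS → Prop) : Prop :=
  ∀ (V : Type) [Finite V] [Nonempty V] (A : V → V → Prop), D' V A →
    ∃ ρ : HomSet A R → HomSet A S, Function.Injective ρ ∧
      ∀ (ξ : HomSet A R) (v : V), GammaComp A (ρ ξ).1 v = GammaComp A ξ.1 v

/-- The class `T_a`: digraphs whose loop-removed digraph is acyclic,
i.e. every closed walk is trivial. -/
def Ta {V : Type} (A : V → V → Prop) : Prop :=
  ∀ (z : ℕ → V) (I : ℕ), 0 < I →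
    (∀ i < I, A (z i) (z (i + 1)) ∧ z i ≠ z (i + 1)) → z 0 ≠ z I

/-- A poset: a reflexive, antisymmetric, transitive digraph. -/
def IsPosetRel {V : Type} (A : V → V → Prop) : Prop :=
  Reflexive A ∧ AntiSymmetric A ∧ Transitive A

/-- An element of `P^*`: an irreflexive, antisymmetric, transitive digraph. -/
def IsStrictPosetRel {V : Type} (A : V → V → Prop) : Prop :=
  Irreflexive A ∧ AntiSymmetric A ∧ Transitive A

/-- The direct (disjoint) sum of two digraphs. -/
def sumRel {V W : Type} (A : V → V → Prop) (B : W → W → Prop) :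
    V ⊕ W → V ⊕ W → Prop
  | Sum.inl v, Sum.inl w => A v w
  | Sum.inr v, Sum.inr w => B v w
  | _, _ => False

/-- The open neighborhood `N(v)`. -/
def Nbr {Z : Type} (A : Z → Z → Prop) (v : Z) : Set Z :=
  {w | w ≠ v ∧ (A v w ∨ A w v)}

/-- The in-neighborhood `N^in(v)`. -/
def NIn {Z : Type} (A : Z → Z → Prop) (v : Z) : Set Z :=
  {w | w ≠ v ∧ A w v}

/-- The out-neighborhood `N^out(v)`. -/
def NOut {Z : Type} (A : Z → Z → Prop) (v : Z) : Set Z :=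
  {w | w ≠ v ∧ A v w}

/-- `A_r`: the arcs of `R` minus all arcs between `M` and `X`. -/
def ArRel {Z : Type} (A : Z → Z → Prop) (X M : Set Z) : Z → Z → Prop :=
  fun v w => A v w ∧ ¬(v ∈ M ∧ w ∈ X) ∧ ¬(v ∈ X ∧ w ∈ M)

/-- `A_d = { m β(x) : m x ∈ A(R) ∩ (M × X) }`. -/
def AdRel {Z : Type} (A : Z → Z → Prop) (X M : Set Z) (β : Z → Z) : Z → Z → Prop :=
  fun v w => v ∈ M ∧ ∃ x ∈ X, A v x ∧ w = β x

/-- `A_u = { β(x) m : x m ∈ A(R) ∩ (X × M) }`. -/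
def AuRel {Z : Type} (A : Z → Z → Prop) (X M : Set Z) (β : Z → Z) : Z → Z → Prop :=
  fun v w => w ∈ M ∧ ∃ x ∈ X, A x w ∧ v = β x

/-- The rearranged digraph `S`, with `A(S) = A_r ∪ A_d ∪ A_u`. -/
def SRel {Z : Type} (A : Z → Z → Prop) (X M : Set Z) (β : Z → Z) : Z → Z → Prop :=
  fun v w => ArRel A X M v w ∨ AdRel A X M β v w ∨ AuRel A X M β v w

/-- `U_ξ = { v : ξ(v) ∈ T and ξ[N_G(v)] ∩ M ≠ ∅ }` (for `T = X`; with `T = Y`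
this gives `U'_ζ`). -/
def USet {V Z : Type} (AG : V → V → Prop) (T M : Set Z) (ξ : V → Z) : Set V :=
  {v | ξ v ∈ T ∧ ∃ w ∈ Nbr AG v, ξ w ∈ M}

open Classical in
/-- The rearranged homomorphism `ρ_G(ξ)`: `β(ξ(v))` on `U_ξ` and `ξ(v)` elsewhere. -/
noncomputable def rhoMap {V Z : Type} (AG : V → V → Prop) (X M : Set Z) (β : Z → Z)
    (ξ : V → Z) : V → Z :=
  fun v => if v ∈ USet AG X M ξ then β (ξ v) else ξ v

-- ### auxiliary lemmas (already verified)

def relOn {V : Type} (A : V → V → Prop) (P : Set V) : P → P → Prop :=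
  fun a b => A a.1 b.1

def getl {α β : Type} : (s : α ⊕ β) → s.isLeft = true → α
  | Sum.inl a, _ => a

def getr {α β : Type} : (s : α ⊕ β) → s.isRight = true → β
  | Sum.inr b, _ => b

lemma inl_getl {α β : Type} (s : α ⊕ β) (h : s.isLeft = true) :
    Sum.inl (getl s h) = s := by
  cases s with
  | inl a => rfl
  | inr b => simp at h

lemma inr_getr {α β : Type} (s : α ⊕ β) (h : s.isRight = true) :
    Sum.inr (getr s h) = s := by
  cases s with
  | inl a => simp at h
  | inr b => rfl

lemma notLeft {α β : Type} {s : α ⊕ β} (h : ¬ s.isLeft = true) : s.isRight = true := by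
  cases s <;> simp_all

lemma notLeft_of_isRight {α β : Type} {s : α ⊕ β} (h : s.isRight = true) :
    ¬ s.isLeft = true := by
  cases s <;> simp_all

lemma isLeft_of_not_isRight {α β : Type} {s : α ⊕ β} (h : ¬ s.isRight = true) :
    s.isLeft = true := by
  cases s <;> simp_all

lemma sumRel_getl {α β : Type} {Ra : α → α → Prop} {Rb : β → β → Prop}
    {s t : α ⊕ β} (h : sumRel Ra Rb s t) (hs : s.isLeft = true) (ht : t.isLeft = true) :
    Ra (getl s hs) (getl t ht) := by
  cases s with
  | inl a => cases t with
    | inl b => exact h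
    | inr b => simp at ht
  | inr a => simp at hs

lemma sumRel_getr {α β : Type} {Ra : α → α → Prop} {Rb : β → β → Prop}
    {s t : α ⊕ β} (h : sumRel Ra Rb s t) (hs : s.isRight = true) (ht : t.isRight = true) :
    Rb (getr s hs) (getr t ht) := by
  cases s with
  | inr a => cases t with
    | inr b => exact h
    | inl b => simp at ht
  | inl a => simp at hs

lemma sumRel_isLeft {α β : Type} {Ra : α → α → Prop} {Rb : β → β → Prop}
    {s t : α ⊕ β} (h : sumRel Ra Rb s t) : s.isLeft = t.isLeft := by
  cases s <;> cases t <;> first | rfl | exact h.elim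

lemma isRight_eq_of_isLeft_eq {α β γ δ : Type} {s : α ⊕ β} {t : γ ⊕ δ}
    (h : s.isLeft = t.isLeft) : s.isRight = t.isRight := by
  cases s <;> cases t <;> simp_all

lemma connIn_mem_right {V : Type} {A : V → V → Prop} {X : Set V} {v w : V}
    (h : ConnIn A X v w) : w ∈ X := by
  obtain ⟨I, z, _, hI, hmem, _⟩ := h
  exact hI ▸ hmem I le_rfl

lemma connIn_subtype {V : Type} (A : V → V → Prop) (P : Set V) (X : Set V)
    (hX : X ⊆ P) (v w : V) (hv : v ∈ P) (hw : w ∈ P) :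
    ConnIn A X v w ↔ ConnIn (relOn A P) {a : P | a.1 ∈ X} ⟨v, hv⟩ ⟨w, hw⟩ := by
  constructor
  · rintro ⟨I, z, hz0, hzI, hmem, hadj⟩
    refine ⟨I, fun i => if h : i ≤ I then ⟨z i, hX (hmem i h)⟩ else ⟨v, hv⟩, ?_, ?_, ?_, ?_⟩
    · simp [Nat.zero_le, hz0]
    · simp [hzI]
    · intro i hi; simp only [dif_pos hi]; exact hmem i hi
    · intro i hi
      have h1 : i ≤ I := hi.le
      have h2 : i + 1 ≤ I := hi
      simp only [dif_pos h1, dif_pos h2]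
      exact hadj i hi
  · rintro ⟨I, z, hz0, hzI, hmem, hadj⟩
    exact ⟨I, fun i => (z i).1, congrArg Subtype.val hz0, congrArg Subtype.val hzI,
      fun i hi => hmem i hi, fun i hi => hadj i hi⟩

lemma gammaComp_congr {V W W' : Type} (A : V → V → Prop) (ζ : V → W) (ζ' : V → W') (v : V)
    (h : {u | ζ u = ζ v} = {u | ζ' u = ζ' v}) :
    GammaComp A ζ v = GammaComp A ζ' v := by
  unfold GammaComp
  rw [h]

lemma gammaComp_comp_inl {V W1 W2 : Type} (A : V → V → Prop) (g : V → W1) (v : V) :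
    GammaComp A (fun u => (Sum.inl (g u) : W1 ⊕ W2)) v = GammaComp A g v :=
  gammaComp_congr _ _ _ _ (by ext u; simp)

lemma gammaComp_comp_inr {V W1 W2 : Type} (A : V → V → Prop) (g : V → W2) (v : V) :
    GammaComp A (fun u => (Sum.inr (g u) : W1 ⊕ W2)) v = GammaComp A g v :=
  gammaComp_congr _ _ _ _ (by ext u; simp)

lemma gammaComp_subtype {V W : Type} (A : V → V → Prop) (P : Set V)
    (ζ : V → W) (v : V) (hv : v ∈ P) (h : ∀ u, ζ u = ζ v → u ∈ P) :
    GammaComp A ζ v =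
      Subtype.val '' (GammaComp (relOn A P) (fun a : P => ζ a.1) ⟨v, hv⟩) := by
  have hX : {u | ζ u = ζ v} ⊆ P := fun u hu => h u hu
  ext w
  constructor
  · intro hw
    have hw' : ConnIn A {u | ζ u = ζ v} v w := hw
    have hwX : w ∈ {u | ζ u = ζ v} := connIn_mem_right hw'
    have hwP : w ∈ P := h w hwX
    exact ⟨⟨w, hwP⟩, (connIn_subtype A P _ hX v w hv hwP).mp hw, rfl⟩
  · rintro ⟨⟨w, hwP⟩, hb, rfl⟩
    exact (connIn_subtype A P _ hX v w hv hwP).mpr hb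

lemma Fcongr {V VR WS : Type} (A : V → V → Prop) (R : VR → VR → Prop) (S : WS → WS → Prop)
    (F : ∀ P : Set V, P.Nonempty → (HomSet (relOn A P) R → HomSet (relOn A P) S))
    (P P' : Set V) (hpp : P = P') (hne : P.Nonempty) (hne' : P'.Nonempty)
    (ζ : HomSet (relOn A P) R) (ζ' : HomSet (relOn A P') R)
    (hζ : ∀ (u : V) (hu : u ∈ P) (hu' : u ∈ P'), ζ.1 ⟨u, hu⟩ = ζ'.1 ⟨u, hu'⟩) :
    ∀ (u : V) (hu : u ∈ P) (hu' : u ∈ P'),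
      (F P hne ζ).1 ⟨u, hu⟩ = (F P' hne' ζ').1 ⟨u, hu'⟩ := by
  subst hpp
  have hzz : ζ = ζ' := Subtype.ext (funext fun a => hζ a.1 a.2 a.2)
  subst hzz
  intro u hu hu'
  rfl

-- ### gluing construction

section Glue

variable {V V1 V2 W1 W2 : Type}
variable (A : V → V → Prop) (R1 : V1 → V1 → Prop) (R2 : V2 → V2 → Prop)
variable {S1 : W1 → W1 → Prop} {S2 : W2 → W2 → Prop}

def PsetL (ξ : HomSet A (sumRel R1 R2)) : Set V := {u | (ξ.1 u).isLeft = true}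

def PsetR (ξ : HomSet A (sumRel R1 R2)) : Set V := {u | (ξ.1 u).isRight = true}

def resL (ξ : HomSet A (sumRel R1 R2)) (P : Set V)
    (hsub : ∀ u, u ∈ P → (ξ.1 u).isLeft = true) : HomSet (relOn A P) R1 :=
  ⟨fun a => getl (ξ.1 a.1) (hsub a.1 a.2),
   fun a b hab => sumRel_getl (ξ.2 hab) _ _⟩

def resR (ξ : HomSet A (sumRel R1 R2)) (P : Set V)
    (hsub : ∀ u, u ∈ P → (ξ.1 u).isRight = true) : HomSet (relOn A P) R2 :=
  ⟨fun a => getr (ξ.1 a.1) (hsub a.1 a.2),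
   fun a b hab => sumRel_getr (ξ.2 hab) _ _⟩

variable (F1 : ∀ P : Set V, P.Nonempty → (HomSet (relOn A P) R1 → HomSet (relOn A P) S1))
variable (F2 : ∀ P : Set V, P.Nonempty → (HomSet (relOn A P) R2 → HomSet (relOn A P) S2))

open Classical in
noncomputable def glueMap (ξ : HomSet A (sumRel R1 R2)) : V → W1 ⊕ W2 :=
  fun v =>
    if h : (ξ.1 v).isLeft = true then
      Sum.inl ((F1 (PsetL A R1 R2 ξ) ⟨v, h⟩ (resL A R1 R2 ξ _ (fun _ hu => hu))).1 ⟨v, h⟩)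
    else
      Sum.inr ((F2 (PsetR A R1 R2 ξ) ⟨v, notLeft h⟩ (resR A R1 R2 ξ _ (fun _ hu => hu))).1
        ⟨v, notLeft h⟩)

lemma glueMap_pos (ξ : HomSet A (sumRel R1 R2)) (v : V) (h : (ξ.1 v).isLeft = true) :
    glueMap A R1 R2 F1 F2 ξ v
      = Sum.inl ((F1 (PsetL A R1 R2 ξ) ⟨v, h⟩ (resL A R1 R2 ξ _ (fun _ hu => hu))).1 ⟨v, h⟩) :=
  dif_pos h

lemma glueMap_neg (ξ : HomSet A (sumRel R1 R2)) (v : V) (h : ¬ (ξ.1 v).isLeft = true) :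
    glueMap A R1 R2 F1 F2 ξ v
      = Sum.inr ((F2 (PsetR A R1 R2 ξ) ⟨v, notLeft h⟩ (resR A R1 R2 ξ _ (fun _ hu => hu))).1
          ⟨v, notLeft h⟩) :=
  dif_neg h

lemma glueMap_isHom (ξ : HomSet A (sumRel R1 R2)) :
    IsHom A (sumRel S1 S2) (glueMap A R1 R2 F1 F2 ξ) := by
  intro v w hvw
  have hLR := sumRel_isLeft (ξ.2 hvw)
  by_cases h : (ξ.1 v).isLeft = true
  · have hw : (ξ.1 w).isLeft = true := by rw [← hLR]; exact h
    rw [glueMap_pos A R1 R2 F1 F2 ξ v h, glueMap_pos A R1 R2 F1 F2 ξ w hw]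
    exact (F1 (PsetL A R1 R2 ξ) ⟨v, h⟩ (resL A R1 R2 ξ _ (fun _ hu => hu))).2 hvw
  · have hw : ¬ (ξ.1 w).isLeft = true := by rw [← hLR]; exact h
    rw [glueMap_neg A R1 R2 F1 F2 ξ v h, glueMap_neg A R1 R2 F1 F2 ξ w hw]
    exact (F2 (PsetR A R1 R2 ξ) ⟨v, notLeft h⟩ (resR A R1 R2 ξ _ (fun _ hu => hu))).2 hvw

noncomputable def glueHom (ξ : HomSet A (sumRel R1 R2)) : HomSet A (sumRel S1 S2) :=
  ⟨glueMap A R1 R2 F1 F2 ξ, glueMap_isHom A R1 R2 F1 F2 ξ⟩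

lemma glue_inj
    (F1inj : ∀ P h, Function.Injective (F1 P h))
    (F2inj : ∀ P h, Function.Injective (F2 P h)) :
    Function.Injective (glueHom A R1 R2 F1 F2) := by
  intro ξ ξ' hEq
  have hv : ∀ v, glueMap A R1 R2 F1 F2 ξ v = glueMap A R1 R2 F1 F2 ξ' v :=
    fun v => congrFun (congrArg Subtype.val hEq) v
  have hside : ∀ v, (ξ.1 v).isLeft = (ξ'.1 v).isLeft := by
    intro v
    by_cases h1 : (ξ.1 v).isLeft = true <;> by_cases h2 : (ξ'.1 v).isLeft = true
    · rw [h1, h2]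
    · have h := hv v
      rw [glueMap_pos A R1 R2 F1 F2 ξ v h1, glueMap_neg A R1 R2 F1 F2 ξ' v h2] at h
      simp at h
    · have h := hv v
      rw [glueMap_neg A R1 R2 F1 F2 ξ v h1, glueMap_pos A R1 R2 F1 F2 ξ' v h2] at h
      simp at h
    · rw [Bool.not_eq_true] at h1 h2
      rw [h1, h2]
  have hsideR : ∀ v, (ξ.1 v).isRight = (ξ'.1 v).isRight :=
    fun v => isRight_eq_of_isLeft_eq (hside v)
  have hPeq : PsetL A R1 R2 ξ = PsetL A R1 R2 ξ' := by
    ext u; simp only [PsetL, Set.mem_setOf_eq, hside u]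
  have hQeq : PsetR A R1 R2 ξ = PsetR A R1 R2 ξ' := by
    ext u; simp only [PsetR, Set.mem_setOf_eq, hsideR u]
  apply Subtype.ext
  funext v
  by_cases h : (ξ.1 v).isLeft = true
  · have h' : (ξ'.1 v).isLeft = true := by rw [← hside v]; exact h
    have hsub' : ∀ u, u ∈ PsetL A R1 R2 ξ → (ξ'.1 u).isLeft = true := by
      intro u hu; rw [← hside u]; exact hu
    have key : ∀ (u : V) (hu : u ∈ PsetL A R1 R2 ξ),
        (F1 (PsetL A R1 R2 ξ) ⟨v, h⟩ (resL A R1 R2 ξ _ (fun _ hx => hx))).1 ⟨u, hu⟩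
          = (F1 (PsetL A R1 R2 ξ) ⟨v, h⟩ (resL A R1 R2 ξ' _ hsub')).1 ⟨u, hu⟩ := by
      intro u hu
      have hu' : u ∈ PsetL A R1 R2 ξ' := hsub' u hu
      have hx := hv u
      rw [glueMap_pos A R1 R2 F1 F2 ξ u hu, glueMap_pos A R1 R2 F1 F2 ξ' u hu'] at hx
      have h2 := Sum.inl.inj hx
      refine h2.trans ?_
      exact Fcongr A R1 S1 F1 (PsetL A R1 R2 ξ') (PsetL A R1 R2 ξ) hPeq.symm ⟨u, hu'⟩ ⟨v, h⟩
        (resL A R1 R2 ξ' _ (fun _ hx => hx)) (resL A R1 R2 ξ' _ hsub')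
        (fun _ _ _ => rfl) u hu' hu
    have hres : resL A R1 R2 ξ (PsetL A R1 R2 ξ) (fun _ hx => hx)
        = resL A R1 R2 ξ' (PsetL A R1 R2 ξ) hsub' := by
      apply F1inj (PsetL A R1 R2 ξ) ⟨v, h⟩
      apply Subtype.ext
      funext a
      exact key a.1 a.2
    have hval : getl (ξ.1 v) h = getl (ξ'.1 v) (hsub' v h) :=
      congrArg (fun t => t.1 ⟨v, h⟩) hres
    calc ξ.1 v = Sum.inl (getl (ξ.1 v) h) := (inl_getl _ h).symm
      _ = Sum.inl (getl (ξ'.1 v) (hsub' v h)) := by rw [hval]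
      _ = ξ'.1 v := inl_getl _ _
  · have hR : (ξ.1 v).isRight = true := notLeft h
    have h'R : (ξ'.1 v).isRight = true := by rw [← hsideR v]; exact hR
    have hsub' : ∀ u, u ∈ PsetR A R1 R2 ξ → (ξ'.1 u).isRight = true := by
      intro u hu; rw [← hsideR u]; exact hu
    have key : ∀ (u : V) (hu : u ∈ PsetR A R1 R2 ξ),
        (F2 (PsetR A R1 R2 ξ) ⟨v, hR⟩ (resR A R1 R2 ξ _ (fun _ hx => hx))).1 ⟨u, hu⟩
          = (F2 (PsetR A R1 R2 ξ) ⟨v, hR⟩ (resR A R1 R2 ξ' _ hsub')).1 ⟨u, hu⟩ := by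
      intro u hu
      have hu' : u ∈ PsetR A R1 R2 ξ' := hsub' u hu
      have huL : ¬ (ξ.1 u).isLeft = true := notLeft_of_isRight hu
      have huL' : ¬ (ξ'.1 u).isLeft = true := by
        rw [← hside u]; exact huL
      have hx := hv u
      rw [glueMap_neg A R1 R2 F1 F2 ξ u huL, glueMap_neg A R1 R2 F1 F2 ξ' u huL'] at hx
      have h2 := Sum.inr.inj hx
      refine h2.trans ?_
      exact Fcongr A R2 S2 F2 (PsetR A R1 R2 ξ') (PsetR A R1 R2 ξ) hQeq.symm ⟨u, hu'⟩ ⟨v, hR⟩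
        (resR A R1 R2 ξ' _ (fun _ hx => hx)) (resR A R1 R2 ξ' _ hsub')
        (fun _ _ _ => rfl) u hu' hu
    have hres : resR A R1 R2 ξ (PsetR A R1 R2 ξ) (fun _ hx => hx)
        = resR A R1 R2 ξ' (PsetR A R1 R2 ξ) hsub' := by
      apply F2inj (PsetR A R1 R2 ξ) ⟨v, hR⟩
      apply Subtype.ext
      funext a
      exact key a.1 a.2
    have hval : getr (ξ.1 v) hR = getr (ξ'.1 v) (hsub' v hR) :=
      congrArg (fun t => t.1 ⟨v, hR⟩) hres
    calc ξ.1 v = Sum.inr (getr (ξ.1 v) hR) := (inr_getr _ hR).symm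
      _ = Sum.inr (getr (ξ'.1 v) (hsub' v hR)) := by rw [hval]
      _ = ξ'.1 v := inr_getr _ _

lemma glue_gamma
    (F1g : ∀ (P : Set V) (h : P.Nonempty) (η : HomSet (relOn A P) R1) (a : P),
      GammaComp (relOn A P) (F1 P h η).1 a = GammaComp (relOn A P) η.1 a)
    (F2g : ∀ (P : Set V) (h : P.Nonempty) (η : HomSet (relOn A P) R2) (a : P),
      GammaComp (relOn A P) (F2 P h η).1 a = GammaComp (relOn A P) η.1 a)
    (ξ : HomSet A (sumRel R1 R2)) (v : V) :
    GammaComp A (glueHom A R1 R2 F1 F2 ξ).1 v = GammaComp A ξ.1 v := by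
  show GammaComp A (glueMap A R1 R2 F1 F2 ξ) v = GammaComp A ξ.1 v
  by_cases h : (ξ.1 v).isLeft = true
  · have hpre1 : ∀ u, ξ.1 u = ξ.1 v → u ∈ PsetL A R1 R2 ξ := by
      intro u hu
      show (ξ.1 u).isLeft = true
      rw [hu]; exact h
    have hpre2 : ∀ u, glueMap A R1 R2 F1 F2 ξ u = glueMap A R1 R2 F1 F2 ξ v
        → u ∈ PsetL A R1 R2 ξ := by
      intro u hu
      by_contra hc
      rw [glueMap_neg A R1 R2 F1 F2 ξ u hc, glueMap_pos A R1 R2 F1 F2 ξ v h] at hu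
      simp at hu
    rw [gammaComp_subtype A (PsetL A R1 R2 ξ) (glueMap A R1 R2 F1 F2 ξ) v h hpre2,
        gammaComp_subtype A (PsetL A R1 R2 ξ) ξ.1 v h hpre1]
    refine congrArg (Set.image Subtype.val) ?_
    have e1 : (fun a : (PsetL A R1 R2 ξ) => glueMap A R1 R2 F1 F2 ξ a.1)
        = fun a => Sum.inl ((F1 (PsetL A R1 R2 ξ) ⟨v, h⟩
            (resL A R1 R2 ξ _ (fun _ hu => hu))).1 a) := by
      funext a
      exact glueMap_pos A R1 R2 F1 F2 ξ a.1 a.2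
    have e2 : (fun a : (PsetL A R1 R2 ξ) => ξ.1 a.1)
        = fun a => Sum.inl ((resL A R1 R2 ξ (PsetL A R1 R2 ξ) (fun _ hu => hu)).1 a) := by
      funext a
      exact (inl_getl (ξ.1 a.1) a.2).symm
    rw [e1, e2]
    simp only [gammaComp_comp_inl]
    exact F1g _ _ _ _
  · have hR : (ξ.1 v).isRight = true := notLeft h
    have hpre1 : ∀ u, ξ.1 u = ξ.1 v → u ∈ PsetR A R1 R2 ξ := by
      intro u hu
      show (ξ.1 u).isRight = true
      rw [hu]; exact hR
    have hpre2 : ∀ u, glueMap A R1 R2 F1 F2 ξ u = glueMap A R1 R2 F1 F2 ξ v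
        → u ∈ PsetR A R1 R2 ξ := by
      intro u hu
      by_contra hc
      have hcL : (ξ.1 u).isLeft = true := isLeft_of_not_isRight hc
      rw [glueMap_pos A R1 R2 F1 F2 ξ u hcL, glueMap_neg A R1 R2 F1 F2 ξ v h] at hu
      simp at hu
    rw [gammaComp_subtype A (PsetR A R1 R2 ξ) (glueMap A R1 R2 F1 F2 ξ) v hR hpre2,
        gammaComp_subtype A (PsetR A R1 R2 ξ) ξ.1 v hR hpre1]
    refine congrArg (Set.image Subtype.val) ?_
    have e1 : (fun a : (PsetR A R1 R2 ξ) => glueMap A R1 R2 F1 F2 ξ a.1)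
        = fun a => Sum.inr ((F2 (PsetR A R1 R2 ξ) ⟨v, hR⟩
            (resR A R1 R2 ξ _ (fun _ hu => hu))).1 a) := by
      funext a
      have haL : ¬ (ξ.1 a.1).isLeft = true := notLeft_of_isRight a.2
      exact glueMap_neg A R1 R2 F1 F2 ξ a.1 haL
    have e2 : (fun a : (PsetR A R1 R2 ξ) => ξ.1 a.1)
        = fun a => Sum.inr ((resR A R1 R2 ξ (PsetR A R1 R2 ξ) (fun _ hu => hu)).1 a) := by
      funext a
      exact (inr_getr (ξ.1 a.1) a.2).symm
    rw [e1, e2]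
    simp only [gammaComp_comp_inr]
    exact F2g _ _ _ _

end Glue

/-- If `R₁ ⊑_Γ S₁` and `R₂ ⊑_Γ S₂` with respect to the class of all finite
digraphs, then `R₁ + R₂ ⊑_Γ S₁ + S₂` with respect to that class, `+` being the
direct (disjoint) sum. -/
theorem stmt15 {V1 V2 W1 W2 : Type}
    [Finite V1] [Nonempty V1] [Finite V2] [Nonempty V2]
    [Finite W1] [Nonempty W1] [Finite W2] [Nonempty W2]
    (R1 : V1 → V1 → Prop) (R2 : V2 → V2 → Prop)
    (S1 : W1 → W1 → Prop) (S2 : W2 → W2 → Prop)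
    (h1 : SqGamma (fun _ _ => True) R1 S1)
    (h2 : SqGamma (fun _ _ => True) R2 S2) :
    SqGamma (fun _ _ => True) (sumRel R1 R2) (sumRel S1 S2) := by
  intro V _ _ A _
  classical
  have key1 : ∀ (P : Set V), P.Nonempty →
      ∃ ρ : HomSet (relOn A P) R1 → HomSet (relOn A P) S1, Function.Injective ρ ∧
        ∀ (η : HomSet (relOn A P) R1) (a : P),
          GammaComp (relOn A P) (ρ η).1 a = GammaComp (relOn A P) η.1 a := by
    intro P hP
    haveI := hP.to_subtype
    exact h1 P (relOn A P) trivial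
  have key2 : ∀ (P : Set V), P.Nonempty →
      ∃ ρ : HomSet (relOn A P) R2 → HomSet (relOn A P) S2, Function.Injective ρ ∧
        ∀ (η : HomSet (relOn A P) R2) (a : P),
          GammaComp (relOn A P) (ρ η).1 a = GammaComp (relOn A P) η.1 a := by
    intro P hP
    haveI := hP.to_subtype
    exact h2 P (relOn A P) trivial
  choose F1 F1inj F1g using key1
  choose F2 F2inj F2g using key2
  exact ⟨glueHom A R1 R2 F1 F2, glue_inj A R1 R2 F1 F2 F1inj F2inj,
    glue_gamma A R1 R2 F1 F2 F1g F2g⟩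
end

section
/- Assume the rearrangement setup and additionally that β is a bijective homomorphism from R|_X to R|_Y and that for all x ∈ X, N^in_R(x) \ M ⊆ N^in_R(β(x)) and N^out_R(x) \ M ⊆ N^out_R(β(x)). For every finite digraph G and every ξ ∈ S(G,R), define ρ_G(ξ) : V(G) → Z by ρ_G(ξ)(v) = β(ξ(v)) if v ∈ U_ξ and ρ_G(ξ)(v) = ξ(v) otherwise. Then ρ_G(ξ) ∈ S(G,S); moreover the inversion formula ξ(v) = β⁻¹(ρ_G(ξ)(v)) for v ∈ U'_{ρ_G(ξ)} and ξ(v) = ρ_G(ξ)(v) otherwise holds, so ρ_G : S(G,R) → S(G,S) is injective; and consequently R ⊑_Γ S with respect to the class of all finite digraphs. -/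
/-! ### Auxiliary lemmas -/

section ConnAux

variable {V W : Type} {AG : V → V → Prop}

lemma dadj_symm {a b : V} (h : DAdj AG a b) : DAdj AG b a := h.elim Or.inr Or.inl

lemma connIn_refl {X : Set V} {v : V} (hv : v ∈ X) : ConnIn AG X v v :=
  ⟨0, fun _ => v, rfl, rfl, fun _ _ => hv, fun i hi => absurd hi (Nat.not_lt_zero i)⟩

lemma connIn_symm {X : Set V} {v w : V} (h : ConnIn AG X v w) : ConnIn AG X w v := by
  obtain ⟨I, z, h0, hI, hm, ha⟩ := h
  refine ⟨I, fun i => z (I - i), by simpa using hI, by simpa using h0,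
    fun i _ => hm _ (Nat.sub_le _ _), fun i hi => ?_⟩
  have h1 := ha (I - (i + 1)) (by omega)
  have h2 : I - (i + 1) + 1 = I - i := by omega
  rw [h2] at h1
  exact dadj_symm h1

lemma connIn_trans {X : Set V} {u v w : V} (h1 : ConnIn AG X v u) (h2 : ConnIn AG X u w) :
    ConnIn AG X v w := by
  obtain ⟨I, z, h0, hI, hm, ha⟩ := h1
  obtain ⟨I', z', h0', hI', hm', ha'⟩ := h2
  refine ⟨I + I', fun i => if i ≤ I then z i else z' (i - I), by simp [h0], ?_, ?_, ?_⟩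
  · by_cases h : I + I' ≤ I
    · have hI0 : I' = 0 := by omega
      have : w = u := by rw [← hI', hI0, h0']
      simp only [if_pos h, this]
      rw [show I + I' = I by omega, hI]
    · simp only [if_neg h]
      rw [show I + I' - I = I' by omega, hI']
  · intro i hi
    by_cases h : i ≤ I
    · simp only [if_pos h]; exact hm i h
    · simp only [if_neg h]; exact hm' (i - I) (by omega)
  · intro i hi
    rcases lt_trichotomy i I with h | h | h
    · simp only [if_pos (by omega : i ≤ I), if_pos (by omega : i + 1 ≤ I)]
      exact ha i h
    · subst h
      simp only [if_pos (le_refl i), if_neg (by omega : ¬ i + 1 ≤ i)]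
      have h1 := ha' 0 (by omega)
      rw [h0', ← hI] at h1
      rw [show i + 1 - i = 1 by omega]
      exact h1
    · simp only [if_neg (by omega : ¬ i ≤ I), if_neg (by omega : ¬ i + 1 ≤ I)]
      have h1 := ha' (i - I) (by omega)
      rw [show i + 1 - I = i - I + 1 by omega]
      exact h1

lemma mem_gammaComp_self {ξ : V → W} (v : V) : v ∈ GammaComp AG ξ v :=
  connIn_refl rfl

lemma eq_of_mem_gammaComp {ξ : V → W} {u v : V} (h : u ∈ GammaComp AG ξ v) : ξ u = ξ v := by
  obtain ⟨I, z, h0, hI, hm, _⟩ := h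
  have := hm I le_rfl
  rwa [hI] at this

lemma gammaComp_eq_of_mem {ξ : V → W} {u v : V} (h : u ∈ GammaComp AG ξ v) :
    GammaComp AG ξ u = GammaComp AG ξ v := by
  have hxi : ξ u = ξ v := eq_of_mem_gammaComp h
  have hset : {t | ξ t = ξ u} = {t | ξ t = ξ v} := by ext t; simp [hxi]
  ext w
  constructor
  · intro hw
    have hw' : ConnIn AG {t | ξ t = ξ v} u w := hset ▸ hw
    exact connIn_trans h hw'
  · intro hw
    have hw' : ConnIn AG {t | ξ t = ξ v} u w := connIn_trans (connIn_symm h) hw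
    show ConnIn AG {t | ξ t = ξ u} u w
    rw [hset]
    exact hw'

lemma mem_gammaComp_of_adj {ξ : V → W} {v w : V} (hadj : DAdj AG v w) (hxi : ξ w = ξ v) :
    w ∈ GammaComp AG ξ v := by
  refine ⟨1, fun i => if i = 0 then v else w, rfl, rfl, ?_, ?_⟩
  · intro i _
    by_cases h : i = 0 <;> simp [h, hxi]
  · intro i hi
    have : i = 0 := by omega
    subst this
    simpa using hadj

lemma connIn_map {W' : Type} {ξ : V → W} {ζ : V → W'}
    (h : ∀ u w, DAdj AG u w → ξ u = ξ w → ζ u = ζ w) {v w : V}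
    (hc : ConnIn AG {t | ξ t = ξ v} v w) : ConnIn AG {t | ζ t = ζ v} v w := by
  obtain ⟨I, z, h0, hI, hm, ha⟩ := hc
  have key : ∀ i, i ≤ I → ζ (z i) = ζ v := by
    intro i
    induction i with
    | zero => intro _; rw [h0]
    | succ n ih =>
      intro hn
      have h1 : ζ (z n) = ζ (z (n + 1)) :=
        h _ _ (ha n (by omega)) (by rw [hm n (by omega), hm (n + 1) hn])
      rw [← h1]
      exact ih (by omega)
  exact ⟨I, z, h0, hI, fun i hi => key i hi, ha⟩

lemma gammaComp_eq_of_iff {W' : Type} {ξ : V → W} {ζ : V → W'}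
    (h : ∀ u w, DAdj AG u w → (ξ u = ξ w ↔ ζ u = ζ w)) (v : V) :
    GammaComp AG ζ v = GammaComp AG ξ v := by
  ext w
  constructor
  · intro hw
    exact connIn_map (fun u w had he => (h u w had).mpr he) hw
  · intro hw
    exact connIn_map (fun u w had he => (h u w had).mp he) hw

lemma gammaComp_strict {ξ : V → W} (hstr : ∀ ⦃v w : V⦄, AG v w → v ≠ w → ξ v ≠ ξ w) (v : V) :
    GammaComp AG ξ v = {v} := by
  ext w
  simp only [Set.mem_singleton_iff]
  constructor
  · rintro ⟨I, z, h0, hI, hm, ha⟩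
    have key : ∀ i, i ≤ I → z i = v := by
      intro i
      induction i with
      | zero => intro _; exact h0
      | succ n ih =>
        intro hn
        have heq : ξ (z n) = ξ (z (n + 1)) := by
          rw [hm n (by omega), hm (n + 1) hn]
        have hz : z n = z (n + 1) := by
          by_contra hne
          rcases ha n (by omega) with h1 | h1
          · exact hstr h1 hne heq
          · exact hstr h1 (Ne.symm hne) heq.symm
        rw [← hz]
        exact ih (by omega)
    rw [← hI]
    exact key I le_rfl
  · rintro rfl
    exact mem_gammaComp_self _

end ConnAux

/-- The saturated version of `U_ξ`: `ξ(v) ∈ X` and the component `Γ_ξ(v)` has a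
neighbour mapped into `M`. -/
def UStar {V Z : Type} (AG : V → V → Prop) (X M : Set Z) (ξ : V → Z) : Set V :=
  {v | ξ v ∈ X ∧ ∃ u ∈ GammaComp AG ξ v, ∃ w ∈ Nbr AG u, ξ w ∈ M}

open Classical in
/-- The rearranged map defined via `UStar`. -/
noncomputable def zetaMap {V Z : Type} (AG : V → V → Prop) (X M : Set Z) (β : Z → Z)
    (ξ : V → Z) : V → Z :=
  fun v => if v ∈ UStar AG X M ξ then β (ξ v) else ξ v

section MainAux

variable {V Z : Type} {AG : V → V → Prop} {A : Z → Z → Prop} {X M Y : Set Z} {β : Z → Z}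

lemma UStar_sat {ξ : V → Z} {u v : V} (h : u ∈ GammaComp AG ξ v) :
    u ∈ UStar AG X M ξ ↔ v ∈ UStar AG X M ξ := by
  simp only [UStar, Set.mem_setOf_eq, eq_of_mem_gammaComp h, gammaComp_eq_of_mem h]

lemma zeta_pos {ξ : V → Z} {v : V} (h : v ∈ UStar AG X M ξ) :
    zetaMap AG X M β ξ v = β (ξ v) := by
  simp only [zetaMap, if_pos h]

lemma zeta_neg {ξ : V → Z} {v : V} (h : v ∉ UStar AG X M ξ) :
    zetaMap AG X M β ξ v = ξ v := by
  simp only [zetaMap, if_neg h]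

lemma UStar_eq_USet {T : Set Z} {ξ : V → Z} (hstr : ∀ ⦃v w : V⦄, AG v w → v ≠ w → ξ v ≠ ξ w) :
    UStar AG T M ξ = USet AG T M ξ := by
  ext v
  simp only [UStar, USet, Set.mem_setOf_eq, gammaComp_strict hstr, Set.mem_singleton_iff,
    exists_eq_left]

lemma rhoMap_eq_zetaMap {ξ : V → Z} (hstr : ∀ ⦃v w : V⦄, AG v w → v ≠ w → ξ v ≠ ξ w) :
    rhoMap AG X M β ξ = zetaMap AG X M β ξ := by
  classical
  funext v
  simp only [rhoMap, zetaMap]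
  exact if_congr (by rw [UStar_eq_USet hstr]) rfl rfl

variable (hXM : X ∩ M = ∅) (hMY : M ∩ Y = ∅)
  (hMNY : ∀ y ∈ Y, M ∩ Nbr A y = ∅)
  (hbij : Set.BijOn β X Y)
  (hβhom : ∀ x ∈ X, ∀ x' ∈ X, A x x' → A (β x) (β x'))
  (hnbh : ∀ x ∈ X, NIn A x \ M ⊆ NIn A (β x) ∧ NOut A x \ M ⊆ NOut A (β x))

include hXM in
lemma notM_of_X {a : Z} (ha : a ∈ X) : a ∉ M :=
  fun hm => Set.eq_empty_iff_forall_notMem.mp hXM a ⟨ha, hm⟩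

include hMY in
lemma notM_of_Y {a : Z} (ha : a ∈ Y) : a ∉ M :=
  fun hm => Set.eq_empty_iff_forall_notMem.mp hMY a ⟨hm, ha⟩

include hXM hMY hbij hβhom hnbh in
lemma zeta_isHom {ξ : V → Z} (hξ : IsHom AG A ξ) :
    IsHom AG (SRel A X M β) (zetaMap AG X M β ξ) := by
  intro v w hvw
  have hA : A (ξ v) (ξ w) := hξ hvw
  by_cases hv : v ∈ UStar AG X M ξ <;> by_cases hw : w ∈ UStar AG X M ξ
  · rw [zeta_pos hv, zeta_pos hw]
    exact Or.inl ⟨hβhom _ hv.1 _ hw.1 hA,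
      fun hc => notM_of_Y hMY (hbij.mapsTo hv.1) hc.1,
      fun hc => notM_of_Y hMY (hbij.mapsTo hw.1) hc.2⟩
  · rw [zeta_pos hv, zeta_neg hw]
    by_cases hyM : ξ w ∈ M
    · exact Or.inr (Or.inr ⟨hyM, ξ v, hv.1, hA, rfl⟩)
    · have hxy : ξ v ≠ ξ w := by
        intro he
        exact hw ((UStar_sat (mem_gammaComp_of_adj (Or.inl hvw) he.symm)).mpr hv)
      have hout : ξ w ∈ NOut A (β (ξ v)) := (hnbh _ hv.1).2 ⟨⟨Ne.symm hxy, hA⟩, hyM⟩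
      exact Or.inl ⟨hout.2, fun hc => notM_of_Y hMY (hbij.mapsTo hv.1) hc.1,
        fun hc => hyM hc.2⟩
  · rw [zeta_neg hv, zeta_pos hw]
    by_cases hxM : ξ v ∈ M
    · exact Or.inr (Or.inl ⟨hxM, ξ w, hw.1, hA, rfl⟩)
    · have hxy : ξ v ≠ ξ w := by
        intro he
        exact hv ((UStar_sat (mem_gammaComp_of_adj (Or.inl hvw) he.symm)).mp hw)
      have hin : ξ v ∈ NIn A (β (ξ w)) := (hnbh _ hw.1).1 ⟨⟨hxy, hA⟩, hxM⟩
      exact Or.inl ⟨hin.2, fun hc => hxM hc.1,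
        fun hc => notM_of_Y hMY (hbij.mapsTo hw.1) hc.2⟩
  · rw [zeta_neg hv, zeta_neg hw]
    refine Or.inl ⟨hA, ?_, ?_⟩
    · rintro ⟨hm, hx⟩
      have hne : v ≠ w := by
        rintro rfl
        exact notM_of_X hXM hx hm
      exact hw ⟨hx, w, mem_gammaComp_self w, v, ⟨hne, Or.inr hvw⟩, hm⟩
    · rintro ⟨hx, hm⟩
      have hne : w ≠ v := by
        rintro rfl
        exact notM_of_X hXM hx hm
      exact hv ⟨hx, v, mem_gammaComp_self v, w, ⟨hne, Or.inl hvw⟩, hm⟩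

include hMY hbij hnbh in
lemma zeta_strict {ξ : V → Z} (hξ : IsStrictHom AG A ξ) :
    ∀ ⦃v w : V⦄, AG v w → v ≠ w → zetaMap AG X M β ξ v ≠ zetaMap AG X M β ξ w := by
  intro v w hvw hne
  have hA : A (ξ v) (ξ w) := hξ.1 hvw
  have hxy : ξ v ≠ ξ w := hξ.2 hvw hne
  by_cases hv : v ∈ UStar AG X M ξ <;> by_cases hw : w ∈ UStar AG X M ξ
  · rw [zeta_pos hv, zeta_pos hw]
    exact fun he => hxy (hbij.injOn hv.1 hw.1 he)
  · rw [zeta_pos hv, zeta_neg hw]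
    by_cases hyM : ξ w ∈ M
    · exact fun he => notM_of_Y hMY (he ▸ hbij.mapsTo hv.1) hyM
    · have hout : ξ w ∈ NOut A (β (ξ v)) := (hnbh _ hv.1).2 ⟨⟨Ne.symm hxy, hA⟩, hyM⟩
      exact Ne.symm hout.1
  · rw [zeta_neg hv, zeta_pos hw]
    by_cases hxM : ξ v ∈ M
    · exact fun he => notM_of_Y hMY (he ▸ hbij.mapsTo hw.1) hxM
    · have hin : ξ v ∈ NIn A (β (ξ w)) := (hnbh _ hw.1).1 ⟨⟨hxy, hA⟩, hxM⟩
      exact hin.1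
  · rw [zeta_neg hv, zeta_neg hw]
    exact hxy

include hMY hbij hnbh in
lemma zeta_adj_iff {ξ : V → Z} (hξ : IsHom AG A ξ) :
    ∀ u w, DAdj AG u w → (ξ u = ξ w ↔ zetaMap AG X M β ξ u = zetaMap AG X M β ξ w) := by
  intro u w hadj
  constructor
  · intro he
    have hmem : w ∈ GammaComp AG ξ u := mem_gammaComp_of_adj hadj he.symm
    have hsat := UStar_sat (X := X) (M := M) hmem
    by_cases hu : u ∈ UStar AG X M ξ
    · rw [zeta_pos hu, zeta_pos (hsat.mpr hu), he]
    · rw [zeta_neg hu, zeta_neg (fun h => hu (hsat.mp h)), he]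
  · intro hz
    by_cases hu : u ∈ UStar AG X M ξ <;> by_cases hw : w ∈ UStar AG X M ξ
    · rw [zeta_pos hu, zeta_pos hw] at hz
      exact hbij.injOn hu.1 hw.1 hz
    · rw [zeta_pos hu, zeta_neg hw] at hz
      by_contra hne
      have hwY : ξ w ∈ Y := hz ▸ hbij.mapsTo hu.1
      have hwM : ξ w ∉ M := notM_of_Y hMY hwY
      have huw : u ≠ w := fun h => hne (by rw [h])
      rcases hadj with h1 | h1
      · exact ((hnbh _ hu.1).2 ⟨⟨Ne.symm hne, hξ h1⟩, hwM⟩).1 hz.symm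
      · exact ((hnbh _ hu.1).1 ⟨⟨Ne.symm hne, hξ h1⟩, hwM⟩).1 hz.symm
    · rw [zeta_neg hu, zeta_pos hw] at hz
      by_contra hne
      have huY : ξ u ∈ Y := hz ▸ hbij.mapsTo hw.1
      have huM : ξ u ∉ M := notM_of_Y hMY huY
      have huw : u ≠ w := fun h => hne (by rw [h])
      rcases hadj with h1 | h1
      · exact ((hnbh _ hw.1).1 ⟨⟨hne, hξ h1⟩, huM⟩).1 hz
      · exact ((hnbh _ hw.1).2 ⟨⟨hne, hξ h1⟩, huM⟩).1 hz
    · rw [zeta_neg hu, zeta_neg hw] at hz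
      exact hz

include hXM hMY hMNY hbij hnbh in
lemma UStar_Y_eq {ξ : V → Z} (hξ : IsHom AG A ξ) :
    UStar AG Y M (zetaMap AG X M β ξ) = UStar AG X M ξ := by
  have hΓ : ∀ v, GammaComp AG (zetaMap AG X M β ξ) v = GammaComp AG ξ v :=
    gammaComp_eq_of_iff (zeta_adj_iff hMY hbij hnbh hξ)
  ext v
  constructor
  · rintro ⟨hv1, u, hu, w, hw, hwM⟩
    by_contra hv
    have hζv : zetaMap AG X M β ξ v = ξ v := zeta_neg hv
    have hwU : w ∉ UStar AG X M ξ := fun h =>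
      notM_of_Y hMY (zeta_pos (β := β) h ▸ hbij.mapsTo h.1 : zetaMap AG X M β ξ w ∈ Y) hwM
    have hwM' : ξ w ∈ M := zeta_neg hwU ▸ hwM
    have hu' : u ∈ GammaComp AG ξ v := (hΓ v) ▸ hu
    have huv : ξ u = ξ v := eq_of_mem_gammaComp hu'
    have huY : ξ u ∈ Y := by rw [huv, ← hζv]; exact hv1
    have hne : ξ w ≠ ξ u := fun h => notM_of_Y hMY (h ▸ huY) hwM'
    have hadj : A (ξ u) (ξ w) ∨ A (ξ w) (ξ u) := hw.2.imp (fun h => hξ h) (fun h => hξ h)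
    exact Set.eq_empty_iff_forall_notMem.mp (hMNY _ huY) (ξ w) ⟨hwM', hne, hadj⟩
  · rintro ⟨hvX, u, hu, w, hw, hwM⟩
    refine ⟨?_, u, (hΓ v).symm ▸ hu, w, hw, ?_⟩
    · rw [zeta_pos ⟨hvX, u, hu, w, hw, hwM⟩]
      exact hbij.mapsTo hvX
    · rwa [zeta_neg (fun h => notM_of_X hXM h.1 hwM)]

include hXM hMY hMNY hbij hnbh in
lemma zeta_inj {ξ ξ' : V → Z} (hξ : IsHom AG A ξ) (hξ' : IsHom AG A ξ')
    (h : zetaMap AG X M β ξ = zetaMap AG X M β ξ') : ξ = ξ' := by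
  have hU : UStar AG X M ξ = UStar AG X M ξ' := by
    rw [← UStar_Y_eq hXM hMY hMNY hbij hnbh hξ, ← UStar_Y_eq hXM hMY hMNY hbij hnbh hξ', h]
  funext v
  by_cases hv : v ∈ UStar AG X M ξ
  · have hv' : v ∈ UStar AG X M ξ' := hU ▸ hv
    have hz := congrFun h v
    rw [zeta_pos hv, zeta_pos hv'] at hz
    exact hbij.injOn hv.1 hv'.1 hz
  · have hv' : v ∉ UStar AG X M ξ' := hU ▸ hv
    have hz := congrFun h v
    rwa [zeta_neg hv, zeta_neg hv'] at hz

end MainAux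


/-- The rearrangement theorem: under the rearrangement setup, with `β` a
bijective homomorphism from `R|_X` to `R|_Y` satisfying the neighborhood
conditions, the map `ρ_G(ξ)` (equal to `β(ξ(v))` on `U_ξ` and `ξ(v)` elsewhere)
is a strict homomorphism `G → S` for every `ξ ∈ S(G,R)`; the inversion formula
(via `U'_{ρ_G(ξ)}` and `β⁻¹`) holds, `ρ_G : S(G,R) → S(G,S)` is injective, and
consequently `R ⊑_Γ S` with respect to the class of all finite digraphs. -/
theorem stmt16 {Z : Type} [Finite Z] [Nonempty Z]
    (A : Z → Z → Prop) (X M Y : Set Z) (β : Z → Z)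
    (hXM : X ∩ M = ∅) (hMY : M ∩ Y = ∅)
    (hMNY : ∀ y ∈ Y, M ∩ Nbr A y = ∅)
    (hbij : Set.BijOn β X Y)
    (hβhom : ∀ x ∈ X, ∀ x' ∈ X, A x x' → A (β x) (β x'))
    (hnbh : ∀ x ∈ X, NIn A x \ M ⊆ NIn A (β x) ∧ NOut A x \ M ⊆ NOut A (β x)) :
    (∀ (V : Type) [Finite V] [Nonempty V] (AG : V → V → Prop) (ξ : V → Z),
      IsStrictHom AG A ξ →
        IsStrictHom AG (SRel A X M β) (rhoMap AG X M β ξ) ∧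
        ∀ v : V,
          (v ∈ USet AG Y M (rhoMap AG X M β ξ) →
            ξ v ∈ X ∧ β (ξ v) = rhoMap AG X M β ξ v) ∧
          (v ∉ USet AG Y M (rhoMap AG X M β ξ) →
            ξ v = rhoMap AG X M β ξ v)) ∧
    (∀ (V : Type) [Finite V] [Nonempty V] (AG : V → V → Prop) (ξ ξ' : V → Z),
      IsStrictHom AG A ξ → IsStrictHom AG A ξ' →
        rhoMap AG X M β ξ = rhoMap AG X M β ξ' → ξ = ξ') ∧
    SqGamma (fun _ _ => True) A (SRel A X M β) := by
  refine ⟨?_, ?_, ?_⟩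
  · intro V _ _ AG ξ hξ
    have hρ : rhoMap AG X M β ξ = zetaMap AG X M β ξ := rhoMap_eq_zetaMap hξ.2
    have hζstr := zeta_strict hMY hbij hnbh hξ
    have hUY : USet AG Y M (rhoMap AG X M β ξ) = UStar AG X M ξ := by
      rw [hρ, ← UStar_eq_USet hζstr, UStar_Y_eq hXM hMY hMNY hbij hnbh hξ.1]
    refine ⟨⟨by rw [hρ]; exact zeta_isHom hXM hMY hbij hβhom hnbh hξ.1,
      by rw [hρ]; exact hζstr⟩, ?_⟩
    intro v
    constructor
    · intro hv
      rw [hUY] at hv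
      exact ⟨hv.1, by rw [hρ, zeta_pos hv]⟩
    · intro hv
      rw [hUY] at hv
      rw [hρ, zeta_neg hv]
  · intro V _ _ AG ξ ξ' hξ hξ' h
    rw [rhoMap_eq_zetaMap hξ.2, rhoMap_eq_zetaMap hξ'.2] at h
    exact zeta_inj hXM hMY hMNY hbij hnbh hξ.1 hξ'.1 h
  · intro V _ _ AG _
    refine ⟨fun ξ => ⟨zetaMap AG X M β ξ.1, zeta_isHom hXM hMY hbij hβhom hnbh ξ.2⟩, ?_, ?_⟩
    · intro ξ ξ' h
      exact Subtype.ext (zeta_inj hXM hMY hMNY hbij hnbh ξ.2 ξ'.2 (congrArg Subtype.val h))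
    · intro ξ v
      exact gammaComp_eq_of_iff (zeta_adj_iff hMY hbij hnbh ξ.2) v
end
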